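/- arXiv:1911.13297 — 4 statements merged into one kernel-verified Lean document; each statement's English description precedes it below -/
import Mathlib

section
/- If S, T, U are numberings of shape λ ⊢ n and U is obtained from T by swapping two entire rows of equal length ℓ, then v_U^S = (−1)^ℓ · v_T^S. -/
open Equiv MonoidAlgebra
open scoped Classical

/-- A *numbering* of shape `μ ⊢ n`: a bijective filling of the cells of the Young diagram `μ`
with the entries `Fin n` (representing `1, …, n`). -/
abbrev YNumbering (μ : YoungDiagram) (n : ℕ) := ↥μ.cells ≃ Fin n

namespace YNumbering

variable {μ : YoungDiagram} {n : ℕ}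

/-- The action of `π ∈ S_n` on numberings: `(π • T) c = π (T c)`. -/
def perm (π : Equiv.Perm (Fin n)) (T : YNumbering μ n) : YNumbering μ n := T.trans π

/-- The row index of the cell of `T` containing the entry `i`. -/
def rowFn (T : YNumbering μ n) (i : Fin n) : ℕ := ((T.symm i : ℕ × ℕ)).1

/-- The column index of the cell of `T` containing the entry `i`. -/
def colFn (T : YNumbering μ n) (i : Fin n) : ℕ := ((T.symm i : ℕ × ℕ)).2

/-- The row group `R(T)`: permutations permuting the entries within each row of `T`. -/
def rowGroup (T : YNumbering μ n) : Subgroup (Equiv.Perm (Fin n)) where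
  carrier := {π | ∀ i, T.rowFn (π i) = T.rowFn i}
  one_mem' := fun _ => rfl
  mul_mem' := by
    intro a b ha hb i
    rw [Equiv.Perm.mul_apply, ha, hb]
  inv_mem' := by
    intro a ha i
    have h := ha (a⁻¹ i)
    rw [Equiv.Perm.coe_inv, Equiv.apply_symm_apply] at h
    exact h.symm

/-- The column group `C(T)`: permutations permuting the entries within each column of `T`. -/
def colGroup (T : YNumbering μ n) : Subgroup (Equiv.Perm (Fin n)) where
  carrier := {π | ∀ i, T.colFn (π i) = T.colFn i}
  one_mem' := fun _ => rfl
  mul_mem' := by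
    intro a b ha hb i
    rw [Equiv.Perm.mul_apply, ha, hb]
  inv_mem' := by
    intro a ha i
    have h := ha (a⁻¹ i)
    rw [Equiv.Perm.coe_inv, Equiv.apply_symm_apply] at h
    exact h.symm

/-- The Young symmetrizer `a_T = Σ_{ρ ∈ R(T)} ρ` in the group algebra `R[S_n]`. -/
noncomputable def aElt (R : Type*) [CommRing R] (T : YNumbering μ n) :
    MonoidAlgebra R (Equiv.Perm (Fin n)) :=
  ∑ ρ : T.rowGroup, MonoidAlgebra.single (ρ : Equiv.Perm (Fin n)) (1 : R)

/-- The Young symmetrizer `b_T = Σ_{ζ ∈ C(T)} sgn(ζ)·ζ` in the group algebra `R[S_n]`. -/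
noncomputable def bElt (R : Type*) [CommRing R] (T : YNumbering μ n) :
    MonoidAlgebra R (Equiv.Perm (Fin n)) :=
  ∑ ζ : T.colGroup, MonoidAlgebra.single (ζ : Equiv.Perm (Fin n))
    (((Equiv.Perm.sign (ζ : Equiv.Perm (Fin n)) : ℤ) : R))

/-- The Young symmetrizer `c_T = b_T · a_T`. -/
noncomputable def cElt (R : Type*) [CommRing R] (T : YNumbering μ n) :
    MonoidAlgebra R (Equiv.Perm (Fin n)) :=
  bElt R T * aElt R T

/-- `σ_{T,S}` : the unique permutation with `σ_{T,S} · T = S`. -/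
def sigmaPerm (T S : YNumbering μ n) : Equiv.Perm (Fin n) := T.symm.trans S

/-- `v_T^S = σ_{T,S} · b_T · a_T` in the group algebra. -/
noncomputable def vElt (R : Type*) [CommRing R] (T S : YNumbering μ n) :
    MonoidAlgebra R (Equiv.Perm (Fin n)) :=
  MonoidAlgebra.single (sigmaPerm T S) (1 : R) * cElt R T

end YNumbering



lemma sign_aux {α : Type*} [DecidableEq α] [Fintype α] :
    ∀ (ℓ : ℕ) (a b : Fin ℓ → α) (τ : Equiv.Perm α),
    Function.Injective a → Function.Injective b →
    (∀ i j, a i ≠ b j) →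
    (∀ j, τ (a j) = b j) → (∀ j, τ (b j) = a j) →
    (∀ x, (∀ j, x ≠ a j ∧ x ≠ b j) → τ x = x) →
    Equiv.Perm.sign τ = (-1) ^ ℓ := by
  intro ℓ
  induction ℓ with
  | zero =>
    intro a b τ _ _ _ _ _ hfix
    have : τ = 1 := Equiv.ext fun x => hfix x (fun j => j.elim0)
    simp [this]
  | succ m ih =>
    intro a b τ ha hb hab hτa hτb hfix
    set L : Fin (m + 1) := Fin.last m with hL
    have hab' : a L ≠ b L := hab L L
    set σ : Equiv.Perm α := Equiv.swap (a L) (b L) * τ with hσ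
    have hσa : ∀ j : Fin m, σ (a j.castSucc) = b j.castSucc := by
      intro j
      have h1 : b j.castSucc ≠ a L := fun h => hab L j.castSucc h.symm
      have h2 : b j.castSucc ≠ b L := fun h => (Fin.castSucc_lt_last j).ne (hb h)
      simp [hσ, hτa, Equiv.swap_apply_of_ne_of_ne h1 h2]
    have hσb : ∀ j : Fin m, σ (b j.castSucc) = a j.castSucc := by
      intro j
      have h1 : a j.castSucc ≠ a L := fun h => (Fin.castSucc_lt_last j).ne (ha h)
      have h2 : a j.castSucc ≠ b L := hab _ _
      simp [hσ, hτb, Equiv.swap_apply_of_ne_of_ne h1 h2]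
    have hσfix : ∀ x, (∀ j : Fin m, x ≠ a j.castSucc ∧ x ≠ b j.castSucc) → σ x = x := by
      intro x hx
      by_cases h1 : x = a L
      · simp [hσ, h1, hτa]
      by_cases h2 : x = b L
      · simp [hσ, h2, hτb]
      have hx' : ∀ j : Fin (m+1), x ≠ a j ∧ x ≠ b j := by
        intro j
        rcases Fin.eq_castSucc_or_eq_last j with ⟨k, rfl⟩ | rfl
        · exact hx k
        · exact ⟨h1, h2⟩
      simp [hσ, hfix x hx', Equiv.swap_apply_of_ne_of_ne h1 h2]
    have hsign : Equiv.Perm.sign σ = (-1) ^ m :=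
      ih (a ∘ Fin.castSucc) (b ∘ Fin.castSucc) σ
        (ha.comp (Fin.castSucc_injective m)) (hb.comp (Fin.castSucc_injective m))
        (fun i j => hab _ _) hσa hσb hσfix
    have hτ : τ = Equiv.swap (a L) (b L) * σ := by
      rw [hσ, ← mul_assoc, Equiv.swap_mul_self, one_mul]
    rw [hτ, map_mul, Equiv.Perm.sign_swap hab', hsign]
    rw [pow_add, pow_one]; exact mul_comm _ _


lemma single_mul_bElt {μ : YoungDiagram} {n : ℕ} (T : YNumbering μ n)
    (τ : Equiv.Perm (Fin n)) (hτ : τ ∈ T.colGroup) :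
    MonoidAlgebra.single τ (1 : ℤ) * YNumbering.bElt ℤ T
      = ((Equiv.Perm.sign τ : ℤ)) • YNumbering.bElt ℤ T := by
  unfold YNumbering.bElt
  rw [Finset.mul_sum, Finset.smul_sum]
  refine Fintype.sum_equiv (Equiv.mulLeft (⟨τ, hτ⟩ : T.colGroup)) _ _ ?_
  intro ζ
  rw [MonoidAlgebra.single_mul_single, one_mul, MonoidAlgebra.smul_single']
  congr 1
  simp [map_mul, Units.val_mul, ← mul_assoc]


/-- If `U` is obtained from `T` by swapping two entire rows `r₁ ≠ r₂` of equal length `ℓ`,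
then `v_U^S = (-1)^ℓ * v_T^S`. -/
theorem vElt_row_swap {μ : YoungDiagram} {n : ℕ}
    (S T U : YNumbering μ n) (r₁ r₂ ℓ : ℕ) (hne : r₁ ≠ r₂)
    (hl₁ : μ.rowLen r₁ = ℓ) (hl₂ : μ.rowLen r₂ = ℓ)
    (hswap : ∀ (j : ℕ) (h₁ : ((r₁, j) : ℕ × ℕ) ∈ μ.cells) (h₂ : ((r₂, j) : ℕ × ℕ) ∈ μ.cells),
      U ⟨(r₁, j), h₁⟩ = T ⟨(r₂, j), h₂⟩ ∧ U ⟨(r₂, j), h₂⟩ = T ⟨(r₁, j), h₁⟩)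
    (hfix : ∀ c : ↥μ.cells, (c : ℕ × ℕ).1 ≠ r₁ → (c : ℕ × ℕ).1 ≠ r₂ → U c = T c) :
    YNumbering.vElt ℤ U S = ((-1 : ℤ) ^ ℓ) • YNumbering.vElt ℤ T S := by
  classical
  -- membership facts
  have hmem : ∀ {r j : ℕ}, μ.rowLen r = ℓ → j < ℓ → ((r, j) : ℕ × ℕ) ∈ μ.cells := by
    intro r j hr hj
    exact (YoungDiagram.mem_cells _).mpr (YoungDiagram.mem_iff_lt_rowLen.mpr (hr ▸ hj))
  have hjlt : ∀ {r j : ℕ}, μ.rowLen r = ℓ → ((r, j) : ℕ × ℕ) ∈ μ.cells → j < ℓ := by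
    intro r j hr hc
    exact hr ▸ YoungDiagram.mem_iff_lt_rowLen.mp ((YoungDiagram.mem_cells _).mp hc)
  -- for each cell c, U c = T d where d is the "row-swapped" cell
  have main : ∀ c : ↥μ.cells, ∃ d : ↥μ.cells, U c = T d ∧
      (d : ℕ × ℕ).2 = (c : ℕ × ℕ).2 ∧ (d : ℕ × ℕ).1 = Equiv.swap r₁ r₂ (c : ℕ × ℕ).1 := by
    rintro ⟨⟨r, j⟩, hc⟩
    by_cases h1 : r = r₁
    · subst h1
      have h₂ : ((r₂, j) : ℕ × ℕ) ∈ μ.cells := hmem hl₂ (hjlt hl₁ hc)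
      exact ⟨⟨(r₂, j), h₂⟩, (hswap j hc h₂).1, rfl, by simp [Equiv.swap_apply_left]⟩
    by_cases h2 : r = r₂
    · subst h2
      have h₁ : ((r₁, j) : ℕ × ℕ) ∈ μ.cells := hmem hl₁ (hjlt hl₂ hc)
      exact ⟨⟨(r₁, j), h₁⟩, (hswap j h₁ hc).2, rfl, by simp [Equiv.swap_apply_right]⟩
    · exact ⟨⟨(r, j), hc⟩, hfix ⟨(r, j), hc⟩ h1 h2, rfl,
        by simp [Equiv.swap_apply_of_ne_of_ne h1 h2]⟩
  -- consequences for row/column functions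
  have hcolFn : U.colFn = T.colFn := by
    funext i
    obtain ⟨d, hd1, hd2, _⟩ := main (U.symm i)
    have hT : T.symm i = d := by
      have : T d = i := by rw [← hd1, U.apply_symm_apply]
      rw [← this, T.symm_apply_apply]
    unfold YNumbering.colFn
    rw [hT, hd2]
  have hrowFn : ∀ i, T.rowFn i = Equiv.swap r₁ r₂ (U.rowFn i) := by
    intro i
    obtain ⟨d, hd1, _, hd3⟩ := main (U.symm i)
    have hT : T.symm i = d := by
      have : T d = i := by rw [← hd1, U.apply_symm_apply]
      rw [← this, T.symm_apply_apply]
    unfold YNumbering.rowFn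
    rw [hT, hd3]
  -- equality of row and column groups
  have hcol : U.colGroup = T.colGroup := by
    ext π
    show (∀ i, U.colFn (π i) = U.colFn i) ↔ (∀ i, T.colFn (π i) = T.colFn i)
    rw [hcolFn]
  have hrow : U.rowGroup = T.rowGroup := by
    ext π
    show (∀ i, U.rowFn (π i) = U.rowFn i) ↔ (∀ i, T.rowFn (π i) = T.rowFn i)
    constructor
    · intro h i; rw [hrowFn, hrowFn, h]
    · intro h i
      have := h i
      rw [hrowFn, hrowFn] at this
      exact (Equiv.swap r₁ r₂).injective this
  have haElt : YNumbering.aElt ℤ U = YNumbering.aElt ℤ T := by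
    unfold YNumbering.aElt; rw [hrow]
  have hbElt : YNumbering.bElt ℤ U = YNumbering.bElt ℤ T := by
    unfold YNumbering.bElt; rw [hcol]
  -- the permutation τ
  set τ : Equiv.Perm (Fin n) := YNumbering.sigmaPerm U T with hτdef
  have hτapp : ∀ c : ↥μ.cells, τ (U c) = T c := by
    intro c
    simp [hτdef, YNumbering.sigmaPerm]
  have hτcol : τ ∈ T.colGroup := by
    intro i
    show T.colFn (τ i) = T.colFn i
    have : T.colFn (τ i) = U.colFn i := by
      unfold YNumbering.colFn
      simp [hτdef, YNumbering.sigmaPerm]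
    rw [this, hcolFn]
  have hsigma : YNumbering.sigmaPerm U S = YNumbering.sigmaPerm T S * τ := by
    ext i
    simp [YNumbering.sigmaPerm, hτdef, Equiv.Perm.mul_apply]
  -- sign of τ
  have hsign : Equiv.Perm.sign τ = (-1) ^ ℓ := by
    set a : Fin ℓ → Fin n := fun j => T ⟨(r₁, (j : ℕ)), hmem hl₁ j.2⟩ with hadef
    set b : Fin ℓ → Fin n := fun j => T ⟨(r₂, (j : ℕ)), hmem hl₂ j.2⟩ with hbdef
    refine sign_aux ℓ a b τ ?_ ?_ ?_ ?_ ?_ ?_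
    · intro i j h
      have := T.injective h
      have := congrArg (fun c => ((c : ↥μ.cells) : ℕ × ℕ).2) this
      exact Fin.ext this
    · intro i j h
      have := T.injective h
      have := congrArg (fun c => ((c : ↥μ.cells) : ℕ × ℕ).2) this
      exact Fin.ext this
    · intro i j h
      have := T.injective h
      have := congrArg (fun c => ((c : ↥μ.cells) : ℕ × ℕ).1) this
      exact hne this
    · intro j
      have h₁ := hmem (r := r₁) (j := (j : ℕ)) hl₁ j.2
      have h₂ := hmem (r := r₂) (j := (j : ℕ)) hl₂ j.2
      have : a j = U ⟨(r₂, (j : ℕ)), h₂⟩ := ((hswap (j : ℕ) h₁ h₂).2).symm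
      rw [this, hτapp]
    · intro j
      have h₁ := hmem (r := r₁) (j := (j : ℕ)) hl₁ j.2
      have h₂ := hmem (r := r₂) (j := (j : ℕ)) hl₂ j.2
      have : b j = U ⟨(r₁, (j : ℕ)), h₁⟩ := ((hswap (j : ℕ) h₁ h₂).1).symm
      rw [this, hτapp]
    · intro x hx
      have hx' : U (U.symm x) = x := U.apply_symm_apply x
      rcases hc : U.symm x with ⟨⟨r, j⟩, hm⟩
      rw [hc] at hx'
      by_cases h1 : r = r₁
      · subst h1
        have hj : j < ℓ := hjlt hl₁ hm
        have h₂ : ((r₂, j) : ℕ × ℕ) ∈ μ.cells := hmem hl₂ hj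
        have : x = b ⟨j, hj⟩ := by
          rw [hbdef]
          simp only
          rw [← (hswap j hm h₂).1, hx']
        exact absurd this (hx ⟨j, hj⟩).2
      by_cases h2 : r = r₂
      · subst h2
        have hj : j < ℓ := hjlt hl₂ hm
        have h₁ : ((r₁, j) : ℕ × ℕ) ∈ μ.cells := hmem hl₁ hj
        have : x = a ⟨j, hj⟩ := by
          rw [hadef]
          simp only
          rw [← (hswap j h₁ hm).2, hx']
        exact absurd this (hx ⟨j, hj⟩).1
      · rw [← hx', hτapp, ← hfix ⟨(r, j), hm⟩ h1 h2]
  -- assemble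
  unfold YNumbering.vElt YNumbering.cElt
  rw [hsigma, haElt, hbElt]
  have hsingle : MonoidAlgebra.single (M := Equiv.Perm (Fin n))
      (YNumbering.sigmaPerm T S * τ) (1 : ℤ)
      = MonoidAlgebra.single (YNumbering.sigmaPerm T S) (1 : ℤ)
        * MonoidAlgebra.single τ (1 : ℤ) := by
    rw [MonoidAlgebra.single_mul_single, mul_one]
  rw [hsingle, mul_assoc, ← mul_assoc (MonoidAlgebra.single τ (1 : ℤ)),
    single_mul_bElt T τ hτcol, hsign, smul_mul_assoc, mul_smul_comm, ← mul_assoc]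
  congr 1
end

section
/- Let T be a numbering of shape λ ⊢ n and suppose two entries lying in the same column of T belong to a set P∪Q, where P and Q are disjoint subsets of {1,…,n}. Let G = S_{P∪Q}. Then Σ_{γ∈G} b_T·a_T·γ can be written as a sum of terms of the form b_T·(e+τ)·ξ with τ a column transposition of some numbering ρ⁻¹·T, and consequently Σ_{γ∈G} b_T·a_T·γ = 0 whenever for every ρ ∈ R(T) some two elements of P∪Q share a column of ρ⁻¹·T. -/
open Equiv MonoidAlgebra
open scoped Classical

/-- A *numbering* of shape `μ ⊢ n`: a bijective filling of the cells of the Young diagram `μ`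
with the entries `Fin n` (representing `1, …, n`). -/
abbrev YoungNumbering (μ : YoungDiagram) (n : ℕ) := ↥μ.cells ≃ Fin n

namespace YoungNumbering

variable {μ : YoungDiagram} {n : ℕ}

/-- The action of `π ∈ S_n` on numberings: `(π • T) c = π (T c)`. -/
def perm (π : Equiv.Perm (Fin n)) (T : YoungNumbering μ n) : YoungNumbering μ n := T.trans π

/-- The row index of the cell of `T` containing the entry `i`. -/
def rowFn (T : YoungNumbering μ n) (i : Fin n) : ℕ := ((T.symm i : ℕ × ℕ)).1

/-- The column index of the cell of `T` containing the entry `i`. -/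
def colFn (T : YoungNumbering μ n) (i : Fin n) : ℕ := ((T.symm i : ℕ × ℕ)).2

/-- The row group `R(T)`: permutations permuting the entries within each row of `T`. -/
def rowGroup (T : YoungNumbering μ n) : Subgroup (Equiv.Perm (Fin n)) where
  carrier := {π | ∀ i, T.rowFn (π i) = T.rowFn i}
  one_mem' := fun _ => rfl
  mul_mem' := by
    intro a b ha hb i
    rw [Equiv.Perm.mul_apply, ha, hb]
  inv_mem' := by
    intro a ha i
    have h := ha (a⁻¹ i)
    rw [show a (a⁻¹ i) = i from Equiv.apply_symm_apply a i] at h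
    exact h.symm

/-- The column group `C(T)`: permutations permuting the entries within each column of `T`. -/
def colGroup (T : YoungNumbering μ n) : Subgroup (Equiv.Perm (Fin n)) where
  carrier := {π | ∀ i, T.colFn (π i) = T.colFn i}
  one_mem' := fun _ => rfl
  mul_mem' := by
    intro a b ha hb i
    rw [Equiv.Perm.mul_apply, ha, hb]
  inv_mem' := by
    intro a ha i
    have h := ha (a⁻¹ i)
    rw [show a (a⁻¹ i) = i from Equiv.apply_symm_apply a i] at h
    exact h.symm

/-- The Young symmetrizer `a_T = Σ_{ρ ∈ R(T)} ρ` in the group algebra `R[S_n]`. -/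
noncomputable def aElt (R : Type*) [CommRing R] (T : YoungNumbering μ n) :
    MonoidAlgebra R (Equiv.Perm (Fin n)) :=
  ∑ ρ : T.rowGroup, MonoidAlgebra.single (ρ : Equiv.Perm (Fin n)) (1 : R)

/-- The Young symmetrizer `b_T = Σ_{ζ ∈ C(T)} sgn(ζ)·ζ` in the group algebra `R[S_n]`. -/
noncomputable def bElt (R : Type*) [CommRing R] (T : YoungNumbering μ n) :
    MonoidAlgebra R (Equiv.Perm (Fin n)) :=
  ∑ ζ : T.colGroup, MonoidAlgebra.single (ζ : Equiv.Perm (Fin n))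
    (((Equiv.Perm.sign (ζ : Equiv.Perm (Fin n)) : ℤ) : R))

/-- The Young symmetrizer `c_T = b_T · a_T`. -/
noncomputable def cElt (R : Type*) [CommRing R] (T : YoungNumbering μ n) :
    MonoidAlgebra R (Equiv.Perm (Fin n)) :=
  bElt R T * aElt R T

/-- `σ_{T,S}` : the unique permutation with `σ_{T,S} · T = S`. -/
def sigmaPerm (T S : YoungNumbering μ n) : Equiv.Perm (Fin n) := T.symm.trans S

/-- `v_T^S = σ_{T,S} · b_T · a_T` in the group algebra. -/
noncomputable def vElt (R : Type*) [CommRing R] (T S : YoungNumbering μ n) :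
    MonoidAlgebra R (Equiv.Perm (Fin n)) :=
  MonoidAlgebra.single (sigmaPerm T S) (1 : R) * cElt R T

end YoungNumbering



namespace YSAux

open YoungNumbering

variable {μ : YoungDiagram} {n : ℕ}

lemma colFn_perm_inv (T : YoungNumbering μ n) (ρ : Equiv.Perm (Fin n)) (i : Fin n) :
    (YoungNumbering.perm ρ⁻¹ T).colFn i = T.colFn (ρ i) := rfl

lemma bElt_mul_single (T : YoungNumbering μ n) (τ : Equiv.Perm (Fin n)) (hτ : τ ∈ T.colGroup) :
    YoungNumbering.bElt ℤ T * MonoidAlgebra.single τ (1 : ℤ)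
      = ((Equiv.Perm.sign τ : ℤ)) • YoungNumbering.bElt ℤ T := by
  unfold YoungNumbering.bElt
  rw [Finset.sum_mul, Finset.smul_sum]
  refine Fintype.sum_equiv (Equiv.mulRight (⟨τ, hτ⟩ : T.colGroup)) _ _ fun ζ => ?_
  simp only [MonoidAlgebra.single_mul_single, Equiv.coe_mulRight, Subgroup.coe_mul,
    MonoidAlgebra.smul_single', Equiv.Perm.sign_mul, Units.val_mul, Int.cast_id]
  congr 1
  rcases Int.units_eq_one_or (Equiv.Perm.sign τ) with h | h <;>
    rcases Int.units_eq_one_or (Equiv.Perm.sign ζ.1) with h2 | h2 <;>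
      simp [h, h2]

end YSAux

/-- Suppose two entries lying in the same column of `T` belong to `P ∪ Q`, where `P` and `Q` are
disjoint subsets of `{1,…,n}`, and let `G = S_{P∪Q}`.  If for every `ρ ∈ R(T)` some two elements
of `P ∪ Q` share a column of `ρ⁻¹ • T`, then `Σ_{γ∈G} b_T * a_T * γ = 0`. -/
theorem sum_cElt_eq_zero {μ : YoungDiagram} {n : ℕ}
    (T : YoungNumbering μ n) (P Q : Finset (Fin n)) (hPQ : Disjoint P Q)
    (G : Subgroup (Equiv.Perm (Fin n)))
    (hG : ∀ π : Equiv.Perm (Fin n), π ∈ G ↔ ∀ i, i ∉ P ∪ Q → π i = i)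
    (hcol : ∃ i j : Fin n, i ∈ P ∪ Q ∧ j ∈ P ∪ Q ∧ i ≠ j ∧ T.colFn i = T.colFn j)
    (hall : ∀ ρ ∈ T.rowGroup, ∃ i j : Fin n, i ∈ P ∪ Q ∧ j ∈ P ∪ Q ∧ i ≠ j ∧
      (YoungNumbering.perm ρ⁻¹ T).colFn i = (YoungNumbering.perm ρ⁻¹ T).colFn j) :
    ∑ γ : G, YoungNumbering.cElt ℤ T * MonoidAlgebra.single (γ : Equiv.Perm (Fin n)) (1 : ℤ) = 0 := by
  classical
  set b := YoungNumbering.bElt ℤ T with hb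
  set Sg := ∑ γ : G, MonoidAlgebra.single (γ : Equiv.Perm (Fin n)) (1 : ℤ) with hSg
  have key : ∀ ρ : T.rowGroup,
      b * MonoidAlgebra.single (ρ : Equiv.Perm (Fin n)) (1 : ℤ) * Sg = 0 := by
    intro ρ
    obtain ⟨i, j, hi, hj, hij, hcoleq⟩ := hall ρ ρ.2
    set τ : Equiv.Perm (Fin n) := Equiv.swap i j with hτdef
    have hτG : τ ∈ G := by
      rw [hG]
      intro k hk
      exact Equiv.swap_apply_of_ne_of_ne (fun h => hk (h ▸ hi)) (fun h => hk (h ▸ hj))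
    set τ' : Equiv.Perm (Fin n) := Equiv.swap ((ρ : Equiv.Perm (Fin n)) i)
      ((ρ : Equiv.Perm (Fin n)) j) with hτ'def
    have hcol' : T.colFn ((ρ : Equiv.Perm (Fin n)) i) = T.colFn ((ρ : Equiv.Perm (Fin n)) j) := by
      simpa [YSAux.colFn_perm_inv] using hcoleq
    have hτ'C : τ' ∈ T.colGroup := by
      intro k
      rcases eq_or_ne k ((ρ : Equiv.Perm (Fin n)) i) with rfl | h1
      · rw [hτ'def, Equiv.swap_apply_left, hcol']
      rcases eq_or_ne k ((ρ : Equiv.Perm (Fin n)) j) with rfl | h2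
      · rw [hτ'def, Equiv.swap_apply_right, hcol']
      · rw [hτ'def, Equiv.swap_apply_of_ne_of_ne h1 h2]
    have hρij : (ρ : Equiv.Perm (Fin n)) i ≠ (ρ : Equiv.Perm (Fin n)) j :=
      fun h => hij ((ρ : Equiv.Perm (Fin n)).injective h)
    have hsign : ((Equiv.Perm.sign τ' : ℤ)) = -1 := by
      rw [hτ'def, Equiv.Perm.sign_swap hρij]; rfl
    have hconj : (ρ : Equiv.Perm (Fin n)) * τ = τ' * (ρ : Equiv.Perm (Fin n)) := by
      ext k
      simp only [hτdef, hτ'def, Equiv.Perm.mul_apply]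
      rcases eq_or_ne k i with rfl | h1
      · simp
      rcases eq_or_ne k j with rfl | h2
      · simp
      · rw [Equiv.swap_apply_of_ne_of_ne h1 h2,
          Equiv.swap_apply_of_ne_of_ne (fun h => h1 ((ρ : Equiv.Perm (Fin n)).injective h))
            (fun h => h2 ((ρ : Equiv.Perm (Fin n)).injective h))]
    have hSS : Sg = MonoidAlgebra.single τ (1 : ℤ) * Sg := by
      rw [hSg, Finset.mul_sum]
      refine Fintype.sum_equiv (Equiv.mulLeft (⟨τ, hτG⟩ : G)) _ _ fun γ => ?_
      simp [MonoidAlgebra.single_mul_single, ← mul_assoc, hτdef, Equiv.swap_mul_self]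
    have hstep : b * MonoidAlgebra.single ((ρ : Equiv.Perm (Fin n))) (1 : ℤ) *
        MonoidAlgebra.single τ (1 : ℤ)
        = - (b * MonoidAlgebra.single ((ρ : Equiv.Perm (Fin n))) (1 : ℤ)) := by
      rw [mul_assoc, MonoidAlgebra.single_mul_single, one_mul, hconj,
        show MonoidAlgebra.single (τ' * (ρ : Equiv.Perm (Fin n))) (1 : ℤ)
            = MonoidAlgebra.single τ' 1 * MonoidAlgebra.single ((ρ : Equiv.Perm (Fin n))) 1 from
          by rw [MonoidAlgebra.single_mul_single, one_mul],
        ← mul_assoc, YSAux.bElt_mul_single T τ' hτ'C, hsign]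
      simp [hb]
    have hneg : b * MonoidAlgebra.single ((ρ : Equiv.Perm (Fin n))) (1 : ℤ) * Sg
        = - (b * MonoidAlgebra.single ((ρ : Equiv.Perm (Fin n))) (1 : ℤ) * Sg) := by
      conv_lhs => rw [hSS]
      rw [← mul_assoc, hstep, neg_mul]
    have h2 : (2 : ℤ) • (b * MonoidAlgebra.single ((ρ : Equiv.Perm (Fin n))) (1 : ℤ) * Sg) = 0 := by
      rw [two_smul]
      nth_rewrite 1 [hneg]
      exact neg_add_cancel _
    refine MonoidAlgebra.coeff_injective (Finsupp.ext fun a => ?_)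
    have h3 := Finsupp.ext_iff.mp (congrArg MonoidAlgebra.coeff h2) a
    rw [MonoidAlgebra.coeff_smul_apply, MonoidAlgebra.coeff_zero, Finsupp.coe_zero, Pi.zero_apply, smul_eq_mul] at h3
    rw [MonoidAlgebra.coeff_zero, Finsupp.coe_zero, Pi.zero_apply]
    linarith
  have hc : YoungNumbering.cElt ℤ T
      = ∑ ρ : T.rowGroup, b * MonoidAlgebra.single ((ρ : Equiv.Perm (Fin n))) (1 : ℤ) := by
    rw [YoungNumbering.cElt, YoungNumbering.aElt, Finset.mul_sum]
  rw [← Finset.mul_sum, hc, Finset.sum_mul]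
  simp only [← hSg, key]
  simp
end

section
/- Let d_1 be the 5×18 integer matrix and d_2 the 18×15 integer matrix given by the (2^3)-isotypic differentials of the graph G_1 (as specified). Then d_1·d_2 = 0, the kernel of d_1 has dimension 13 over ℚ, and d_2 has rank 11 over ℚ; hence dim ker d_1 − rank d_2 = 2. -/
/-- The matrix of the differential `d₁(G₁)` on the `(2,2,2)`-isotypic components. -/
def d1G1 : Matrix (Fin 5) (Fin 18) ℤ :=
  Matrix.of ![![1, 0, 0, 0, -1, 0, 1, -1, 0, 1, -1, 0, -1, 0, 0, 0, 1, 0],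
    ![0, 0, 1, 0, -1, 0, 0, 0, 0, 1, 0, 0, 0, -1, 0, 0, 0, 1],
    ![0, 1, 0, 0, 0, -1, 0, 0, 1, 0, -1, 0, -1, 0, 1, 0, 0, 0],
    ![0, 0, 0, 1, 0, -1, 0, 1, 0, 0, 0, 0, 0, -1, 0, 1, 0, 0],
    ![0, 0, 0, 0, 0, 0, 0, 1, 0, -1, 0, 1, 0, 0, 0, 0, 0, 0]]

/-- The matrix of the differential `d₂(G₁)` on the `(2,2,2)`-isotypic components. -/
def d2G1 : Matrix (Fin 18) (Fin 15) ℤ :=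
  Matrix.of ![![-1, 0, 1, 1, 0, -1, 0, 0, 0, 0, 0, 0, 0, 0, 0],
    ![0, -1, 1, 1, -1, 0, 0, 0, 0, 0, 0, 0, 0, 0, 0],
    ![0, 0, 0, 0, 0, 0, 1, 0, -1, 0, 0, 0, 0, 0, 0],
    ![0, 0, 0, 0, 0, 0, 1, -1, 0, 0, 0, 0, 0, 0, 0],
    ![0, 0, 0, 0, 0, 0, 0, 0, 0, 1, 0, -1, 0, 0, 0],
    ![0, 0, 0, 0, 0, 0, 0, 0, 0, 1, -1, 0, 0, 0, 0],
    ![1, 0, 0, 0, 0, 0, 0, 0, 0, 0, 0, 0, -1, 0, 0],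
    ![0, 0, 0, 0, 0, 0, 0, 0, 0, 0, 0, 0, 0, 0, 0],
    ![0, 1, 0, 0, 0, 0, 0, 0, 0, 0, 0, 0, 0, -1, 0],
    ![0, 0, 0, 0, 0, 0, 0, 0, 0, 0, 0, 0, 0, 0, 0],
    ![0, 0, 1, 0, 0, 0, 0, 0, 0, 0, 0, 0, 0, 0, -1],
    ![0, 0, 0, 0, 0, 0, 0, 0, 0, 0, 0, 0, 0, 0, 0],
    ![0, 0, 0, 1, 0, 0, 0, 0, 0, -1, 0, 0, 0, 0, 1],
    ![0, 0, 0, 0, 0, 0, 1, 0, 0, -1, 0, 0, 0, 0, 0],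
    ![0, 0, 0, 0, 1, 0, 0, 0, 0, 0, -1, 0, 0, 1, 0],
    ![0, 0, 0, 0, 0, 0, 0, 1, 0, 0, -1, 0, 0, 0, 0],
    ![0, 0, 0, 0, 0, 1, 0, 0, 0, 0, 0, -1, 1, 0, 0],
    ![0, 0, 0, 0, 0, 0, 0, 0, 1, 0, 0, -1, 0, 0, 0]]

def pOneG1 : Matrix (Fin 5) (Fin 5) ℤ :=
  Matrix.of ![![1, 0, 0, 0, 1],
    ![0, 0, 1, 0, 0],
    ![0, 1, 0, 0, 0],
    ![0, 0, 0, 1, -1],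
    ![0, 0, 0, 0, 1]]

def qOneG1 : Matrix (Fin 18) (Fin 5) ℤ :=
  Matrix.of ![![1, 0, 0, 0, 0],
    ![0, 1, 0, 0, 0],
    ![0, 0, 1, 0, 0],
    ![0, 0, 0, 1, 0],
    ![0, 0, 0, 0, 0],
    ![0, 0, 0, 0, 0],
    ![0, 0, 0, 0, 0],
    ![0, 0, 0, 0, 1],
    ![0, 0, 0, 0, 0],
    ![0, 0, 0, 0, 0],
    ![0, 0, 0, 0, 0],
    ![0, 0, 0, 0, 0],
    ![0, 0, 0, 0, 0],
    ![0, 0, 0, 0, 0],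
    ![0, 0, 0, 0, 0],
    ![0, 0, 0, 0, 0],
    ![0, 0, 0, 0, 0],
    ![0, 0, 0, 0, 0]]

def pTwoG1 : Matrix (Fin 11) (Fin 18) ℤ :=
  Matrix.of ![![0, 0, 0, 0, 0, 0, 1, 0, 0, 0, 0, 0, 0, 0, 0, 0, 0, 0],
    ![0, 0, 0, 0, 0, 0, 0, 0, 1, 0, 0, 0, 0, 0, 0, 0, 0, 0],
    ![0, 0, 0, 0, 0, 0, 0, 0, 0, 0, 1, 0, 0, 0, 0, 0, 0, 0],
    ![0, 0, 0, 0, 1, 0, 0, 0, 0, 0, 0, 0, 1, 0, 0, 0, 0, 0],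
    ![0, -1, 0, 0, 1, 0, 0, 0, -1, 0, 1, 0, 1, 0, 0, 0, 0, 0],
    ![-1, 0, 0, 0, 1, 0, -1, 0, 0, 0, 1, 0, 1, 0, 0, 0, 0, 0],
    ![0, 0, 0, 0, 1, 0, 0, 0, 0, 0, 0, 0, 0, 1, 0, 0, 0, 0],
    ![0, 0, 0, -1, 1, 0, 0, 0, 0, 0, 0, 0, 0, 1, 0, 0, 0, 0],
    ![0, 0, -1, 0, 1, 0, 0, 0, 0, 0, 0, 0, 0, 1, 0, 0, 0, 0],
    ![0, 0, 0, 0, 1, 0, 0, 0, 0, 0, 0, 0, 0, 0, 0, 0, 0, 0],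
    ![0, 0, 0, 0, 1, -1, 0, 0, 0, 0, 0, 0, 0, 0, 0, 0, 0, 0]]

def qTwoG1 : Matrix (Fin 15) (Fin 11) ℤ :=
  Matrix.of ![![1, 0, 0, 0, 0, 0, 0, 0, 0, 0, 0],
    ![0, 1, 0, 0, 0, 0, 0, 0, 0, 0, 0],
    ![0, 0, 1, 0, 0, 0, 0, 0, 0, 0, 0],
    ![0, 0, 0, 1, 0, 0, 0, 0, 0, 0, 0],
    ![0, 0, 0, 0, 1, 0, 0, 0, 0, 0, 0],
    ![0, 0, 0, 0, 0, 1, 0, 0, 0, 0, 0],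
    ![0, 0, 0, 0, 0, 0, 1, 0, 0, 0, 0],
    ![0, 0, 0, 0, 0, 0, 0, 1, 0, 0, 0],
    ![0, 0, 0, 0, 0, 0, 0, 0, 1, 0, 0],
    ![0, 0, 0, 0, 0, 0, 0, 0, 0, 1, 0],
    ![0, 0, 0, 0, 0, 0, 0, 0, 0, 0, 1],
    ![0, 0, 0, 0, 0, 0, 0, 0, 0, 0, 0],
    ![0, 0, 0, 0, 0, 0, 0, 0, 0, 0, 0],
    ![0, 0, 0, 0, 0, 0, 0, 0, 0, 0, 0],
    ![0, 0, 0, 0, 0, 0, 0, 0, 0, 0, 0]]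

def aTwoG1 : Matrix (Fin 18) (Fin 11) ℤ :=
  Matrix.of ![![-1, 0, 1, 1, 0, -1, 0, 0, 0, 0, 0],
    ![0, -1, 1, 1, -1, 0, 0, 0, 0, 0, 0],
    ![0, 0, 0, 0, 0, 0, 1, 0, -1, 0, 0],
    ![0, 0, 0, 0, 0, 0, 1, -1, 0, 0, 0],
    ![0, 0, 0, 0, 0, 0, 0, 0, 0, 1, 0],
    ![0, 0, 0, 0, 0, 0, 0, 0, 0, 1, -1],
    ![1, 0, 0, 0, 0, 0, 0, 0, 0, 0, 0],
    ![0, 0, 0, 0, 0, 0, 0, 0, 0, 0, 0],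
    ![0, 1, 0, 0, 0, 0, 0, 0, 0, 0, 0],
    ![0, 0, 0, 0, 0, 0, 0, 0, 0, 0, 0],
    ![0, 0, 1, 0, 0, 0, 0, 0, 0, 0, 0],
    ![0, 0, 0, 0, 0, 0, 0, 0, 0, 0, 0],
    ![0, 0, 0, 1, 0, 0, 0, 0, 0, -1, 0],
    ![0, 0, 0, 0, 0, 0, 1, 0, 0, -1, 0],
    ![0, 0, 0, 0, 1, 0, 0, 0, 0, 0, -1],
    ![0, 0, 0, 0, 0, 0, 0, 1, 0, 0, -1],
    ![0, 0, 0, 0, 0, 1, 0, 0, 0, 0, 0],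
    ![0, 0, 0, 0, 0, 0, 0, 0, 1, 0, 0]]

def bTwoG1 : Matrix (Fin 11) (Fin 15) ℤ :=
  Matrix.of ![![1, 0, 0, 0, 0, 0, 0, 0, 0, 0, 0, 0, -1, 0, 0],
    ![0, 1, 0, 0, 0, 0, 0, 0, 0, 0, 0, 0, 0, -1, 0],
    ![0, 0, 1, 0, 0, 0, 0, 0, 0, 0, 0, 0, 0, 0, -1],
    ![0, 0, 0, 1, 0, 0, 0, 0, 0, 0, 0, -1, 0, 0, 1],
    ![0, 0, 0, 0, 1, 0, 0, 0, 0, 0, 0, -1, 0, 1, 0],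
    ![0, 0, 0, 0, 0, 1, 0, 0, 0, 0, 0, -1, 1, 0, 0],
    ![0, 0, 0, 0, 0, 0, 1, 0, 0, 0, 0, -1, 0, 0, 0],
    ![0, 0, 0, 0, 0, 0, 0, 1, 0, 0, 0, -1, 0, 0, 0],
    ![0, 0, 0, 0, 0, 0, 0, 0, 1, 0, 0, -1, 0, 0, 0],
    ![0, 0, 0, 0, 0, 0, 0, 0, 0, 1, 0, -1, 0, 0, 0],
    ![0, 0, 0, 0, 0, 0, 0, 0, 0, 0, 1, -1, 0, 0, 0]]


lemma mapMul {l m n : Type*} [Fintype m] (M : Matrix l m ℤ) (N : Matrix m n ℤ) :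
    (M * N).map (Int.cast : ℤ → ℚ) = M.map (Int.cast : ℤ → ℚ) * N.map (Int.cast : ℤ → ℚ) := by
  ext i j
  simp [Matrix.mul_apply]

lemma pOne_mul : pOneG1 * d1G1 * qOneG1 = 1 := by decide
lemma pTwo_mul : pTwoG1 * d2G1 * qTwoG1 = 1 := by decide
lemma d2_fact : d2G1 = aTwoG1 * bTwoG1 := by decide

lemma rank_d1 : (d1G1.map (Int.cast : ℤ → ℚ)).rank = 5 := by
  have hmap : (pOneG1.map (Int.cast : ℤ → ℚ)) * (d1G1.map (Int.cast : ℤ → ℚ)) *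
      (qOneG1.map (Int.cast : ℤ → ℚ)) = 1 := by
    have := congrArg (Matrix.map · (Int.cast : ℤ → ℚ)) pOne_mul
    simpa [mapMul] using this
  refine le_antisymm ?_ ?_
  · simpa using Matrix.rank_le_card_height (d1G1.map (Int.cast : ℤ → ℚ))
  · calc (5 : ℕ) = (1 : Matrix (Fin 5) (Fin 5) ℚ).rank := by simp
    _ ≤ (d1G1.map (Int.cast : ℤ → ℚ) * qOneG1.map (Int.cast : ℤ → ℚ)).rank := by
        rw [← hmap, Matrix.mul_assoc]
        exact Matrix.rank_mul_le_right _ _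
    _ ≤ (d1G1.map (Int.cast : ℤ → ℚ)).rank := Matrix.rank_mul_le_left _ _

lemma rank_d2 : (d2G1.map (Int.cast : ℤ → ℚ)).rank = 11 := by
  have hmap : (pTwoG1.map (Int.cast : ℤ → ℚ)) * (d2G1.map (Int.cast : ℤ → ℚ)) *
      (qTwoG1.map (Int.cast : ℤ → ℚ)) = 1 := by
    have := congrArg (Matrix.map · (Int.cast : ℤ → ℚ)) pTwo_mul
    simpa [mapMul] using this
  have hfact : d2G1.map (Int.cast : ℤ → ℚ) =
      (aTwoG1.map (Int.cast : ℤ → ℚ)) * (bTwoG1.map (Int.cast : ℤ → ℚ)) := by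
    have := congrArg (Matrix.map · (Int.cast : ℤ → ℚ)) d2_fact
    simpa [mapMul] using this
  refine le_antisymm ?_ ?_
  · calc (d2G1.map (Int.cast : ℤ → ℚ)).rank
        = ((aTwoG1.map (Int.cast : ℤ → ℚ)) * (bTwoG1.map (Int.cast : ℤ → ℚ))).rank := by
          rw [hfact]
    _ ≤ (bTwoG1.map (Int.cast : ℤ → ℚ)).rank := Matrix.rank_mul_le_right _ _
    _ ≤ 11 := by simpa using Matrix.rank_le_card_height (bTwoG1.map (Int.cast : ℤ → ℚ))
  · calc (11 : ℕ) = (1 : Matrix (Fin 11) (Fin 11) ℚ).rank := by simp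
    _ ≤ (d2G1.map (Int.cast : ℤ → ℚ) * qTwoG1.map (Int.cast : ℤ → ℚ)).rank := by
        rw [← hmap, Matrix.mul_assoc]
        exact Matrix.rank_mul_le_right _ _
    _ ≤ (d2G1.map (Int.cast : ℤ → ℚ)).rank := Matrix.rank_mul_le_left _ _

lemma ker_d1 :
    Module.finrank ℚ
      (LinearMap.ker (Matrix.mulVecLin (d1G1.map (Int.cast : ℤ → ℚ)))) = 13 := by
  have h := LinearMap.finrank_range_add_finrank_ker
    (Matrix.mulVecLin (d1G1.map (Int.cast : ℤ → ℚ)))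
  have hr : Module.finrank ℚ
      (LinearMap.range (Matrix.mulVecLin (d1G1.map (Int.cast : ℤ → ℚ)))) = 5 := rank_d1
  rw [hr, Module.finrank_fintype_fun_eq_card] at h
  simp only [Fintype.card_fin] at h
  omega

/-- For the `(2,2,2)`-isotypic differentials of the graph `G₁`: `d₁ · d₂ = 0`, the kernel of
`d₁` has dimension `13` over `ℚ`, `d₂` has rank `11` over `ℚ`, and hence
`dim ker d₁ - rank d₂ = 2`. -/
theorem G1_isotypic_differentials :
    d1G1 * d2G1 = 0 ∧
    Module.finrank ℚ
      (LinearMap.ker (Matrix.mulVecLin (d1G1.map (Int.cast : ℤ → ℚ)))) = 13 ∧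
    (d2G1.map (Int.cast : ℤ → ℚ)).rank = 11 ∧
    Module.finrank ℚ
        (LinearMap.ker (Matrix.mulVecLin (d1G1.map (Int.cast : ℤ → ℚ)))) -
      (d2G1.map (Int.cast : ℤ → ℚ)).rank = 2 := by
  refine ⟨by decide, ker_d1, rank_d2, ?_⟩
  rw [ker_d1, rank_d2]
end

section
/- Let d_1 be the 9×27 and d_2 the 27×18 integer matrices giving the (2,2,1,1)-isotypic differentials of K_{3,3}. Let g ∈ ℤ^18 and h ∈ ℤ^27 be the explicit integer vectors specified. Then d_1·d_2 = 0, d_2·g = 2h, d_1·h = 0, and h is not in the image of d_2 over ℤ; consequently the homology group ker(d_1)/im(d_2) over ℤ contains an element of order 2. -/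
/-- The matrix of the differential `d₁(K₃₃)` on the `(2,2,1,1)`-isotypic components. -/
def d1K33 : Matrix (Fin 9) (Fin 27) ℤ :=
  Matrix.of ![![1, 0, 0, -1, 0, 0, 0, -1, 0, -1, 0, 0, 0, 0, 0, 1, -1, 1, 0, -1, 0, -1, 0, -1, 0, 0, 0],
    ![0, 1, 0, 0, 0, 0, 0, 0, -1, 0, -1, 0, 0, 0, -1, 0, 0, 0, 0, 0, -1, -1, 0, -1, 1, 0, 0],
    ![0, 0, 1, 0, 0, 0, -1, 1, -1, 0, 0, -1, 0, 0, -1, 0, 0, 0, 1, 0, 0, 0, 0, 0, 1, 0, 0],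
    ![0, 0, 0, -1, 0, 0, 0, 0, 0, -1, 0, 0, 0, 0, 0, 0, 0, 0, 0, -1, 0, 0, -1, 0, 0, 0, 0],
    ![0, 0, 0, 0, 0, 0, 0, 0, 0, 0, -1, 0, 1, 0, 0, 0, 1, 0, 0, 0, -1, 0, -1, 0, 0, 1, 0],
    ![0, 0, 0, 0, 0, 0, -1, 0, 0, 0, 0, -1, 0, 0, 0, 0, 0, 1, 0, 0, 0, 0, 0, 0, 0, 1, 0],
    ![0, 0, 0, 0, 1, 0, 0, 0, 0, 0, 0, 0, 0, 1, 0, 0, 1, 0, 0, 0, 0, 0, 0, 0, 0, 0, 1],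
    ![0, 0, 0, 0, 0, 1, 0, -1, 0, 0, 0, 0, 0, 0, 0, 0, 0, 1, 0, -1, 0, 0, 0, -1, 0, 0, 1],
    ![0, 0, 0, 0, 0, 0, 0, 0, -1, 0, 0, 0, 0, 0, -1, 0, 0, 0, 0, 0, -1, 0, 0, -1, 0, 0, 0]]

/-- The matrix of the differential `d₂(K₃₃)` on the `(2,2,1,1)`-isotypic components. -/
def d2K33 : Matrix (Fin 27) (Fin 18) ℤ :=
  Matrix.of ![![-1, 0, 1, 0, 0, 0, 0, 0, 0, 0, 0, 0, 0, 0, 0, 0, 0, 0],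
    ![0, 0, 1, -1, 0, 0, 0, 0, 0, 0, 0, 0, 0, 0, 0, 0, 0, 0],
    ![0, -1, 0, -1, 0, 0, 0, 0, 0, 0, 0, 0, 0, 0, 0, 0, 0, 0],
    ![0, 0, 0, 0, -1, 0, -1, 0, 0, 0, 0, 0, 0, 0, 0, 0, 0, 0],
    ![0, 0, 0, 0, 0, -1, 0, -1, 0, 0, 0, 0, 0, 0, 0, 0, 0, 0],
    ![0, 0, 0, 0, 0, 0, 1, -1, 0, 0, 0, 0, 0, 0, 0, 0, 0, 0],
    ![0, 0, 0, 0, 0, 0, 0, 0, -1, 0, 1, 0, 0, 0, 0, 0, 0, 0],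
    ![0, 0, 0, 0, 0, 0, 0, 0, 0, 0, 1, -1, 0, 0, 0, 0, 0, 0],
    ![0, 0, 0, 0, 0, 0, 0, 0, 0, -1, 0, -1, 0, 0, 0, 0, 0, 0],
    ![0, 0, 0, 0, 1, 0, 0, 0, 0, 0, 0, 0, 1, 0, 0, 0, 0, 0],
    ![0, 0, 0, 0, 0, 0, 0, 0, 0, 0, 0, 0, 1, -1, 0, 0, 0, 0],
    ![0, 0, 0, 0, 0, 0, 0, 0, 1, 0, 0, 0, 0, -1, 0, 0, 0, 0],
    ![0, 0, 0, 0, 0, 0, 0, 0, 0, 0, 0, 0, 0, 0, 1, -1, 0, 0],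
    ![0, 0, 0, 0, 0, 1, 0, 0, 0, 0, 0, 0, 0, 0, 1, 0, 0, 0],
    ![0, 0, 0, 0, 0, 0, 0, 0, 0, 1, 0, 0, 0, 0, 0, 1, 0, 0],
    ![1, 0, 0, 0, 0, 0, 0, 0, 0, 0, 0, 0, 0, 0, -1, 0, 0, 0],
    ![0, 0, 0, 0, 0, 0, 0, 0, 0, 0, 0, 0, 0, 0, -1, 0, -1, 0],
    ![0, 0, 0, 0, 0, 0, 0, 0, 0, 0, 1, 0, 0, 0, 0, 0, -1, 0],
    ![0, 1, 0, 0, 0, 0, 0, 0, 0, 0, 0, 0, 0, 0, 0, 1, 0, 0],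
    ![0, 0, 0, 0, 0, 0, 1, 0, 0, 0, 0, 0, 0, 0, 0, 0, 0, -1],
    ![0, 0, 0, 0, 0, 0, 0, 0, 0, 0, 0, 0, 0, 0, 0, -1, 0, -1],
    ![0, 0, 1, 0, 0, 0, 0, 0, 0, 0, 0, 0, -1, 0, 0, 0, 0, 0],
    ![0, 0, 0, 0, 0, 0, 0, 0, 0, 0, 0, 0, -1, 0, 0, 0, 0, 1],
    ![0, 0, 0, 0, 0, 0, 0, 0, 0, 0, 0, 1, 0, 0, 0, 0, 0, 1],
    ![0, 0, 0, 1, 0, 0, 0, 0, 0, 0, 0, 0, 0, -1, 0, 0, 0, 0],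
    ![0, 0, 0, 0, 0, 0, 0, 0, 0, 0, 0, 0, 0, -1, 0, 0, 1, 0],
    ![0, 0, 0, 0, 0, 0, 0, 1, 0, 0, 0, 0, 0, 0, 0, 0, 1, 0]]

/-- The explicit vector `g` (in the `W`-basis). -/
def gK33 : Fin 18 → ℤ := ![1, -1, 1, 1, -1, -1, 1, 1, 1, -1, 1, 1, 1, 1, 1, 1, -1, 1]

/-- The explicit vector `h` (in the `X`-basis). -/
def hK33 : Fin 27 → ℤ := ![0, 0, 0, 0, 0, 0, 0, 0, 0, 0, 0, 0, 0, 0, 0, 0, 0, 1, 0, 0, -1, 0, 0, 1, 0, -1, 0]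


def uK33 : Fin 27 → ℤ :=
  ![0, 0, 0, 1, 1, 1, 1, 0, 0, 1, 1, 1, 0, 1, 0, 0, 1, 1, 0, 0, 0, 0, 0, 0, 0, 0, 0]

set_option maxHeartbeats 4000000 in
set_option maxRecDepth 40000 in
lemma K33_aux1 : d1K33 * d2K33 = 0 := by decide

set_option maxHeartbeats 4000000 in
set_option maxRecDepth 40000 in
lemma K33_aux2 : d2K33.mulVec gK33 = 2 • hK33 := by decide

set_option maxHeartbeats 4000000 in
set_option maxRecDepth 40000 in
lemma K33_aux3 : d1K33.mulVec hK33 = 0 := by decide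

set_option maxHeartbeats 4000000 in
set_option maxRecDepth 40000 in
/-- For the `(2,2,1,1)`-isotypic differentials of `K₃₃`: `d₁ · d₂ = 0`, `d₂ g = 2h`,
`d₁ h = 0`, and `h` is not in the image of `d₂` over `ℤ`; consequently the homology group
`ker d₁ / im d₂` over `ℤ` contains an element of order `2`. -/
theorem K33_torsion :
    d1K33 * d2K33 = 0 ∧
    d2K33.mulVec gK33 = 2 • hK33 ∧
    d1K33.mulVec hK33 = 0 ∧
    (¬ ∃ x : Fin 18 → ℤ, d2K33.mulVec x = hK33) ∧
    ∃ z : ↥(LinearMap.ker d1K33.mulVecLin) ⧸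
        Submodule.comap (LinearMap.ker d1K33.mulVecLin).subtype
          (LinearMap.range d2K33.mulVecLin),
      addOrderOf z = 2 := by
  have hd1d2 := K33_aux1
  have hd2g := K33_aux2
  have hd1h := K33_aux3
  have hnot : ¬ ∃ x : Fin 18 → ℤ, d2K33.mulVec x = hK33 := by
    rintro ⟨x, hx⟩
    have h1 : Matrix.vecMul uK33 d2K33 =
        ![0, 0, 0, 0, 0, 0, 0, -2, 0, 0, 2, 0, 2, -2, 0, 0, -2, 0] := by decide
    have h2 : dotProduct uK33 hK33 = 1 := by decide
    have h3 : dotProduct uK33 (d2K33.mulVec x) = 1 := by rw [hx, h2]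
    rw [Matrix.dotProduct_mulVec, h1] at h3
    simp [dotProduct, Fin.sum_univ_succ] at h3
    omega
  refine ⟨hd1d2, hd2g, hd1h, hnot, ?_⟩
  have hker : hK33 ∈ LinearMap.ker d1K33.mulVecLin := by
    simp [LinearMap.mem_ker, Matrix.mulVecLin_apply, hd1h]
  refine ⟨Submodule.Quotient.mk ⟨hK33, hker⟩, ?_⟩
  haveI : Fact (Nat.Prime 2) := ⟨Nat.prime_two⟩
  apply addOrderOf_eq_prime
  · rw [← Submodule.Quotient.mk_smul, Submodule.Quotient.mk_eq_zero,
      Submodule.mem_comap]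
    refine ⟨gK33, ?_⟩
    simp only [Matrix.mulVecLin_apply, hd2g, Submodule.coe_subtype]
    rfl
  · intro h0
    rw [Submodule.Quotient.mk_eq_zero, Submodule.mem_comap] at h0
    obtain ⟨x, hx⟩ := h0
    exact hnot ⟨x, hx⟩
end
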